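/- In a graph spectral triple, the spectral distance between two points i and j is finite if and only if i and j are connected by a path in the graph (i.e., a sequence of indices with nonzero consecutive entries of D). -/

import Mathlib

open scoped ENNReal

/-- A path in the graph with incidence matrix `Dm`, from `i` to `j`: a finite sequence
of distinct vertices with consecutive vertices linked by nonzero entries of `Dm`. -/
structure GraphPath (N : ℕ) (Dm : Matrix (Fin N) (Fin N) ℝ) (i j : Fin N) where
  len : ℕ
  vert : Fin (len + 1) → Fin N
  inj : Function.Injective vert
  first : vert 0 = i
  last : vert (Fin.last len) = j
  link : ∀ k : Fin len, Dm (vert k.castSucc) (vert k.succ) ≠ 0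

set_option synthInstance.maxHeartbeats 1000000 in
/-- Matrix entries are bounded by the operator norm. -/
lemma entry_le_norm {N : ℕ} (M : Matrix (Fin N) (Fin N) ℂ) (a b : Fin N) :
    ‖M a b‖ ≤ ‖Matrix.toEuclideanCLM (𝕜 := ℂ) M‖ := by
  have h1 : (Matrix.toEuclideanCLM (𝕜 := ℂ) M) (EuclideanSpace.single b 1) a = M a b := by
    have := Matrix.ofLp_toEuclideanCLM (𝕜 := ℂ) M (EuclideanSpace.single b 1)
    have h2 : WithLp.ofLp (EuclideanSpace.single b (1:ℂ)) = Pi.single b 1 := rfl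
    rw [h2] at this
    have := congrFun this a
    simpa [Matrix.mulVec_single] using this
  calc ‖M a b‖ = ‖(Matrix.toEuclideanCLM (𝕜 := ℂ) M) (EuclideanSpace.single b 1) a‖ := by rw [h1]
    _ ≤ ‖(Matrix.toEuclideanCLM (𝕜 := ℂ) M) (EuclideanSpace.single b 1)‖ := by
        have := norm_inner_le_norm (𝕜 := ℂ) (EuclideanSpace.single a (1:ℂ))
          ((Matrix.toEuclideanCLM (𝕜 := ℂ) M) (EuclideanSpace.single b 1))
        simpa [EuclideanSpace.inner_single_left, EuclideanSpace.norm_single] using this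
    _ ≤ ‖Matrix.toEuclideanCLM (𝕜 := ℂ) M‖ := by
        simpa [EuclideanSpace.norm_single] using
          (Matrix.toEuclideanCLM (𝕜 := ℂ) M).le_opNorm (EuclideanSpace.single b 1)

/-- From any walk (possibly with repeated vertices) one can extract an injective path. -/
lemma exists_graphPath_of_walk {N : ℕ} (Dm : Matrix (Fin N) (Fin N) ℝ) (i j : Fin N) :
    ∀ L : ℕ, ∀ v : ℕ → Fin N, v 0 = i → v L = j →
      (∀ k < L, Dm (v k) (v (k+1)) ≠ 0) → Nonempty (GraphPath N Dm i j) := by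
  intro L
  induction L using Nat.strong_induction_on with
  | _ L ih =>
    intro v h0 hL hlink
    by_cases hinj : ∃ a b, a < b ∧ b ≤ L ∧ v a = v b
    · obtain ⟨a, b, hab, hbL, hvab⟩ := hinj
      set L' := L - (b - a) with hL'
      have hlt : L' < L := by omega
      set w : ℕ → Fin N := fun k => if k ≤ a then v k else v (k + (b - a)) with hw
      have hw0 : w 0 = i := by simp [hw, h0]
      have hwL : w L' = j := by
        by_cases h : L' ≤ a
        · have hb : b = L := by omega
          have ha' : L' = a := by omega
          rw [hw]; simp only [ha', le_refl, if_pos]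
          rw [hvab, hb, hL]
        · rw [hw]; simp only [if_neg h]
          rw [show L' + (b - a) = L by omega, hL]
      have hwlink : ∀ k < L', Dm (w k) (w (k+1)) ≠ 0 := by
        intro k hk
        by_cases h1 : k + 1 ≤ a
        · have e1 : w k = v k := by rw [hw]; simp only [if_pos (by omega : k ≤ a)]
          have e2 : w (k+1) = v (k+1) := by rw [hw]; simp only [if_pos h1]
          rw [e1, e2]; exact hlink k (by omega)
        · by_cases h2 : k ≤ a
          · have hka : k = a := by omega
            have e1 : w k = v b := by
              rw [hw]; simp only [if_pos h2]; rw [hka]; exact hvab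
            have e2 : w (k+1) = v (b+1) := by
              rw [hw]; simp only [if_neg h1]; congr 1; omega
            rw [e1, e2]; exact hlink b (by omega)
          · have e1 : w k = v (k + (b - a)) := by rw [hw]; simp only [if_neg h2]
            have e2 : w (k+1) = v (k + (b - a) + 1) := by
              rw [hw]; simp only [if_neg h1]; congr 1; omega
            rw [e1, e2]; exact hlink (k + (b - a)) (by omega)
      exact ih L' hlt w hw0 hwL hwlink
    · push_neg at hinj
      refine ⟨⟨L, fun k => v k, ?_, by simp [h0], by simp [Fin.last, hL], ?_⟩⟩
      · intro x y hxy
        by_contra hne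
        rcases Nat.lt_or_ge (x : ℕ) (y : ℕ) with h | h
        · exact hinj x y h (by omega) hxy
        · have h' : (y : ℕ) < (x : ℕ) := by
            rcases Nat.lt_or_ge (y : ℕ) (x : ℕ) with h' | h'
            · exact h'
            · exact absurd (Fin.ext (by omega)) hne
          exact hinj y x h' (by omega) hxy.symm
      · intro k
        simpa using hlink k k.isLt

/-- The spectral distance between two points of a graph is finite iff the points are
connected by a path. -/
theorem graph_distance_finite_iff_connected (N : ℕ) (Dm : Matrix (Fin N) (Fin N) ℝ)
    (hsym : Dm.IsSymm) (hdiag : ∀ i, Dm i i = 0) (i j : Fin N) :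
    (⨆ z : {z : Fin N → ℂ // ‖Matrix.toEuclideanCLM (𝕜 := ℂ)
        ((Dm.map (fun x => (x : ℂ))) * Matrix.diagonal z
          - Matrix.diagonal z * (Dm.map (fun x => (x : ℂ))))‖ ≤ 1},
      ENNReal.ofReal ‖(z : Fin N → ℂ) i - (z : Fin N → ℂ) j‖) < ⊤
      ↔ Nonempty (GraphPath N Dm i j) := by
  set Dc : Matrix (Fin N) (Fin N) ℂ := Dm.map (fun x => (x : ℂ)) with hDc
  constructor
  · -- finite → connected; contrapositive: not connected → sup = ⊤
    intro hfin
    by_contra hcon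
    -- the reachability relation
    set R : Fin N → Fin N → Prop := Relation.ReflTransGen (fun a b => Dm a b ≠ 0) with hR
    have hRsymm : ∀ a b, Dm a b ≠ 0 → Dm b a ≠ 0 := by
      intro a b h
      rwa [show Dm b a = Dm a b from by rw [← Matrix.IsSymm.apply hsym]]
    have hRij : ¬ R i j := by
      intro hreach
      apply hcon
      -- turn a ReflTransGen chain into a walk
      have : ∀ c : Fin N, R i c → ∃ (L : ℕ) (v : ℕ → Fin N), v 0 = i ∧ v L = c ∧
          ∀ k < L, Dm (v k) (v (k+1)) ≠ 0 := by
        intro c hc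
        induction hc with
        | refl => exact ⟨0, fun _ => i, rfl, rfl, by omega⟩
        | tail _ hbc ihw =>
          obtain ⟨L, v, hv0, hvL, hvlink⟩ := ihw
          rename_i b c _
          refine ⟨L + 1, fun k => if k ≤ L then v k else c, by simp [hv0], by simp, ?_⟩
          intro k hk
          by_cases h : k + 1 ≤ L
          · simpa [show k ≤ L by omega, h] using hvlink k (by omega)
          · have hkL : k = L := by omega
            simp only [hkL, le_refl, if_pos, if_neg (by omega : ¬ L + 1 ≤ L), hvL]
            exact hbc
      obtain ⟨L, v, hv0, hvL, hvlink⟩ := this j hreach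
      exact exists_graphPath_of_walk Dm i j L v hv0 hvL hvlink
    -- for every t ≥ 0, the indicator of the component of i scaled by t is admissible
    have key : ∀ t : ℝ, ENNReal.ofReal t ≤
        (⨆ z : {z : Fin N → ℂ // ‖Matrix.toEuclideanCLM (𝕜 := ℂ)
          (Dc * Matrix.diagonal z - Matrix.diagonal z * Dc)‖ ≤ 1},
        ENNReal.ofReal ‖(z : Fin N → ℂ) i - (z : Fin N → ℂ) j‖) := by
      intro t
      classical
      set z : Fin N → ℂ := fun a => if R i a then (t : ℂ) else 0 with hz
      have hcomm : Dc * Matrix.diagonal z - Matrix.diagonal z * Dc = 0 := by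
        ext a b
        simp only [Matrix.sub_apply, Matrix.mul_diagonal, Matrix.diagonal_mul,
          Matrix.zero_apply]
        by_cases hD : Dm a b = 0
        · simp [hDc, Matrix.map_apply, hD]
        · have hzz : z a = z b := by
            simp only [hz]
            by_cases ha : R i a
            · rw [if_pos ha, if_pos (ha.tail hD)]
            · rw [if_neg ha, if_neg (fun hb => ha (hb.tail (hRsymm a b hD)))]
          rw [hzz]; ring
      have hadm : ‖Matrix.toEuclideanCLM (𝕜 := ℂ)
          (Dc * Matrix.diagonal z - Matrix.diagonal z * Dc)‖ ≤ 1 := by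
        rw [hcomm, map_zero, norm_zero]; exact zero_le_one
      have hzi : z i = (t : ℂ) := by
        have hrii : R i i := Relation.ReflTransGen.refl
        simp [hz, hrii]
      have hzj : z j = 0 := by simp [hz, hRij]
      calc ENNReal.ofReal t ≤ ENNReal.ofReal ‖z i - z j‖ := by
            apply ENNReal.ofReal_le_ofReal
            rw [hzi, hzj, sub_zero]
            calc t ≤ |t| := le_abs_self t
              _ = ‖(t : ℂ)‖ := by rw [Complex.norm_real, Real.norm_eq_abs]
        _ ≤ _ := le_iSup (fun z : {z : Fin N → ℂ // ‖Matrix.toEuclideanCLM (𝕜 := ℂ)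
              (Dc * Matrix.diagonal z - Matrix.diagonal z * Dc)‖ ≤ 1} =>
              ENNReal.ofReal ‖(z : Fin N → ℂ) i - (z : Fin N → ℂ) j‖) ⟨z, hadm⟩
    obtain ⟨n, hn⟩ := ENNReal.exists_nat_gt hfin.ne
    have := key n
    rw [ENNReal.ofReal_natCast] at this
    exact absurd (lt_of_le_of_lt this hn) (lt_irrefl _)
  · -- connected → finite
    rintro ⟨p⟩
    set C : ℝ := ∑ k : Fin p.len, |Dm (p.vert k.castSucc) (p.vert k.succ)|⁻¹ with hC
    refine lt_of_le_of_lt (iSup_le fun z => ?_) ((ENNReal.ofReal_lt_top : ENNReal.ofReal C < ⊤))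
    obtain ⟨z, hzn⟩ := z
    apply ENNReal.ofReal_le_ofReal
    show ‖z i - z j‖ ≤ C
    -- each edge gives a bound on the difference
    have hedge : ∀ k : Fin p.len,
        ‖z (p.vert k.succ) - z (p.vert k.castSucc)‖ ≤
          |Dm (p.vert k.castSucc) (p.vert k.succ)|⁻¹ := by
      intro k
      set a := p.vert k.castSucc
      set b := p.vert k.succ
      have hD : Dm a b ≠ 0 := p.link k
      have hent : ‖(Dc * Matrix.diagonal z - Matrix.diagonal z * Dc) a b‖ ≤ 1 :=
        le_trans (entry_le_norm _ a b) hzn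
      have hval : (Dc * Matrix.diagonal z - Matrix.diagonal z * Dc) a b
          = (Dm a b : ℂ) * (z b - z a) := by
        simp only [Matrix.sub_apply, Matrix.mul_diagonal, Matrix.diagonal_mul, hDc,
          Matrix.map_apply]
        ring
      rw [hval] at hent
      rw [norm_mul, Complex.norm_real, Real.norm_eq_abs] at hent
      have hpos : 0 < |Dm a b| := abs_pos.mpr hD
      calc ‖z b - z a‖ = (|Dm a b| * ‖z b - z a‖) / |Dm a b| := by field_simp
        _ ≤ 1 / |Dm a b| := by gcongr
        _ = |Dm a b|⁻¹ := one_div _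
    -- telescoping
    set f : ℕ → ℂ := fun k => z (p.vert ⟨min k p.len, by omega⟩) with hf
    have hf0 : f 0 = z i := by
      show z (p.vert ⟨0 ⊓ p.len, by omega⟩) = z i
      have h00 : (⟨0 ⊓ p.len, by omega⟩ : Fin (p.len+1)) = 0 := by
        ext; simp
      rw [h00, p.first]
    have hfL : f p.len = z j := by
      show z (p.vert ⟨p.len ⊓ p.len, by omega⟩) = z j
      have h00 : (⟨p.len ⊓ p.len, by omega⟩ : Fin (p.len+1)) = Fin.last p.len := by
        ext; simp [Fin.last]
      rw [h00, p.last]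
    have htel : z j - z i = ∑ k ∈ Finset.range p.len, (f (k+1) - f k) := by
      rw [Finset.sum_range_sub f p.len, hf0, hfL]
    have : ‖z i - z j‖ = ‖z j - z i‖ := norm_sub_rev _ _
    rw [this, htel]
    set g : ℕ → ℝ := fun k => if h : k < p.len then
        |Dm (p.vert (⟨k, h⟩ : Fin p.len).castSucc)
          (p.vert (⟨k, h⟩ : Fin p.len).succ)|⁻¹ else 0 with hg
    calc ‖∑ k ∈ Finset.range p.len, (f (k+1) - f k)‖
        ≤ ∑ k ∈ Finset.range p.len, ‖f (k+1) - f k‖ := norm_sum_le _ _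
      _ ≤ ∑ k ∈ Finset.range p.len, g k := by
          apply Finset.sum_le_sum
          intro k hk
          rw [Finset.mem_range] at hk
          rw [hg]
          show _ ≤ if h : k < p.len then _ else 0
          rw [dif_pos hk]
          have h1 : f (k+1) = z (p.vert (⟨k, by omega⟩ : Fin p.len).succ) := by
            show z (p.vert ⟨(k+1) ⊓ p.len, by omega⟩) = _
            congr 1
            · congr 1
              ext
              simp only [Fin.val_succ]
              omega
          have h2 : f k = z (p.vert (⟨k, by omega⟩ : Fin p.len).castSucc) := by
            show z (p.vert ⟨k ⊓ p.len, by omega⟩) = _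
            congr 1
            · congr 1
              ext
              simp only [Fin.coe_castSucc]
              omega
          rw [h1, h2]
          exact hedge ⟨k, hk⟩
      _ = ∑ k : Fin p.len, g ↑k := (Fin.sum_univ_eq_sum_range g p.len).symm
      _ = C := by
          rw [hC]
          apply Finset.sum_congr rfl
          intro k _
          rw [hg]
          show (if h : (k:ℕ) < p.len then _ else 0) = _
          rw [dif_pos k.isLt]
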